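/- Let d be a nonempty finite type, N : ℕ, and ρ a density matrix on d. Define σ : Matrix (Fin (N+1) → d) (Fin (N+1) → d) ℂ by σ x y = ∏ i, ρ (x i) (y i) (the (N+1)-fold Kronecker power of ρ), and let P : Matrix (Fin (N+1) → d) (Fin (N+1) → d) ℂ be the permutation matrix P x y = 1 if x = y ∘ finRotate (N+1) and 0 otherwise, implementing a cyclic shift of the N+1 tensor factors. Then the partial trace over the factor indexed by 0 of P * σ * Pᴴ, i.e. the matrix T : Matrix (Fin N → d) (Fin N → d) ℂ with T x y = ∑ k : d, (P * σ * Pᴴ) (Fin.cons k x) (Fin.cons k y), satisfies T x y = ∏ i, ρ (x i) (y i). That is, the N-fold Kronecker power ρ^{⊗N} is a fixed point of Deutsch's update map for the cyclic-shift cloning circuit: feeding in a fresh copy of ρ, cyclically shifting the N+1 systems, and discarding the outgoing system returns ρ^{⊗N}. -/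
import Mathlib


open Matrix
open scoped ComplexOrder

/-- The `N`-fold Kronecker power `ρ^{⊗N}` is a fixed point of Deutsch's update map
for the cyclic-shift cloning circuit: feeding in a fresh copy of `ρ`, cyclically
shifting the `N+1` systems, and discarding the outgoing system returns `ρ^{⊗N}`. -/
theorem dctc_cloning_fixed_point {d : Type*} [Fintype d] [Nonempty d] [DecidableEq d]
    (N : ℕ) (ρ : Matrix d d ℂ) (hρ : ρ.PosSemidef) (hρtr : ρ.trace = 1) :
    ∀ x y : Fin N → d,
      (∑ k : d,
        ((Matrix.of fun u v : Fin (N + 1) → d =>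
              if u = v ∘ finRotate (N + 1) then (1 : ℂ) else 0) *
            (Matrix.of fun u v : Fin (N + 1) → d => ∏ i, ρ (u i) (v i)) *
            (Matrix.of fun u v : Fin (N + 1) → d =>
              if u = v ∘ finRotate (N + 1) then (1 : ℂ) else 0)ᴴ)
          (Fin.cons k x) (Fin.cons k y)) =
      ∏ i, ρ (x i) (y i) := by
  intro x y
  set r := finRotate (N + 1) with hr
  set P : Matrix (Fin (N + 1) → d) (Fin (N + 1) → d) ℂ :=
    Matrix.of fun u v : Fin (N + 1) → d => if u = v ∘ r then (1 : ℂ) else 0 with hP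
  set σ : Matrix (Fin (N + 1) → d) (Fin (N + 1) → d) ℂ :=
    Matrix.of fun u v : Fin (N + 1) → d => ∏ i, ρ (u i) (v i) with hσ
  have h1 : ∀ a w : Fin (N + 1) → d, (P * σ) a w = σ (a ∘ r.symm) w := by
    intro a w
    rw [mul_apply]
    rw [Finset.sum_eq_single (a ∘ ⇑r.symm)]
    · have : a = (a ∘ ⇑r.symm) ∘ ⇑r := by
        funext i; simp [Function.comp]
      simp [hP, ← this]
    · intro v _ hv
      have : a ≠ v ∘ ⇑r := by
        intro h
        apply hv
        funext i
        have := congrFun h (r.symm i)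
        simpa [Function.comp] using this.symm
      simp [hP, this]
    · intro h; exact absurd (Finset.mem_univ _) h
  have h2 : ∀ a b : Fin (N + 1) → d, (P * σ * Pᴴ) a b = σ (a ∘ r.symm) (b ∘ r.symm) := by
    intro a b
    rw [mul_apply]
    rw [Finset.sum_eq_single (b ∘ ⇑r.symm)]
    · have hb : b = (b ∘ ⇑r.symm) ∘ ⇑r := by
        funext i; simp [Function.comp]
      rw [h1]
      simp [hP, conjTranspose_apply, ← hb]
    · intro w _ hw
      have : b ≠ w ∘ ⇑r := by
        intro h
        apply hw
        funext i
        have := congrFun h (r.symm i)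
        simpa [Function.comp] using this.symm
      simp [hP, conjTranspose_apply, this]
    · intro h; exact absurd (Finset.mem_univ _) h
  have h3 : ∀ k : d, (P * σ * Pᴴ) (Fin.cons k x) (Fin.cons k y)
      = ρ k k * ∏ i, ρ (x i) (y i) := by
    intro k
    rw [h2]
    have : σ (Fin.cons k x ∘ ⇑r.symm) (Fin.cons k y ∘ ⇑r.symm)
        = ∏ i : Fin (N + 1), ρ ((Fin.cons k x : Fin (N+1) → d) i) ((Fin.cons k y : Fin (N+1) → d) i) := by
      simp only [hσ, Matrix.of_apply, Function.comp]
      exact Equiv.prod_comp r.symm (fun i => ρ ((Fin.cons k x : Fin (N+1) → d) i) ((Fin.cons k y : Fin (N+1) → d) i))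
    rw [this, Fin.prod_univ_succ]
    simp
  simp only [h3, ← Finset.sum_mul]
  have : (∑ k : d, ρ k k) = 1 := hρtr
  rw [this, one_mul]
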